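/- Let A be a commutative ring and B a commutative A-algebra that is free of finite rank n as an A-module. If the module of Kähler differentials Ω_{B/A} is zero, then the discriminant Disc(B/A) of any A-basis of B is a unit of A. -/

import Mathlib

open TensorProduct

section Aux

variable {A B : Type*} [CommRing A] [CommRing B] [Algebra A B]

/-- The key identity: if `t = ∑ p ∈ s, p.1 ⊗ p.2` is a separability idempotent,
then `∑ p, Tr(b p.1) • p.2 = b`. -/
theorem aux_key {n : ℕ} (ε : Module.Basis (Fin n) A B) (s : Finset (B × B))
    (ht₁ : ∀ x : B, ∀ i : Fin n, (∑ p ∈ s, ε.coord i p.1 • (x * p.2)) =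
      ∑ p ∈ s, ε.coord i (x * p.1) • p.2)
    (ht₂ : (∑ p ∈ s, p.1 * p.2) = 1) (b : B) :
    (∑ p ∈ s, Algebra.trace A B (b * p.1) • p.2) = b := by
  classical
  have htr : ∀ c : B, Algebra.trace A B c = ∑ i, ε.coord i (c * ε i) := by
    intro c
    rw [Algebra.trace_eq_matrix_trace ε c, Matrix.trace]
    refine Finset.sum_congr rfl fun i _ => ?_
    simp [Algebra.leftMulMatrix_eq_repr_mul, Module.Basis.coord_apply]
  calc (∑ p ∈ s, Algebra.trace A B (b * p.1) • p.2)
      = ∑ p ∈ s, ∑ i, ε.coord i ((b * ε i) * p.1) • p.2 := by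
        refine Finset.sum_congr rfl fun p _ => ?_
        rw [htr, Finset.sum_smul]
        refine Finset.sum_congr rfl fun i _ => ?_
        ring_nf
    _ = ∑ i, ∑ p ∈ s, ε.coord i ((b * ε i) * p.1) • p.2 := Finset.sum_comm
    _ = ∑ i, ∑ p ∈ s, ε.coord i p.1 • ((b * ε i) * p.2) := by
        refine Finset.sum_congr rfl fun i _ => ?_
        exact (ht₁ (b * ε i) i).symm
    _ = b := by
        have : ∀ i, ∀ p : B × B, ε.coord i p.1 • ((b * ε i) * p.2)
            = b * ((ε.coord i p.1 • ε i) * p.2) := by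
          intro i p
          rw [smul_mul_assoc, mul_smul_comm]
          ring_nf
        simp_rw [this]
        rw [Finset.sum_comm]
        simp_rw [← Finset.mul_sum, ← Finset.sum_mul]
        have hrepr : ∀ p : B × B, (∑ i, ε.coord i p.1 • ε i) = p.1 := fun p => by
          simpa [Module.Basis.coord_apply] using ε.sum_repr p.1
        simp_rw [hrepr, ht₂, mul_one]

end Aux

theorem free_algebra_omega_eq_zero_discr_isUnit
    (A B : Type*) [CommRing A] [CommRing B] [Algebra A B]
    (n : ℕ) (ε : Module.Basis (Fin n) A B)
    (h : (⊤ : Submodule B (Ω[B⁄A])) = ⊥) :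
    IsUnit (Algebra.discr A ε) := by
  classical
  have hfin : Module.Finite A B := Module.Finite.of_basis ε
  have hsub : Subsingleton (Ω[B⁄A]) := by
    constructor
    intro x y
    have hx : x ∈ (⊥ : Submodule B (Ω[B⁄A])) := h ▸ Submodule.mem_top
    have hy : y ∈ (⊥ : Submodule B (Ω[B⁄A])) := h ▸ Submodule.mem_top
    rw [Submodule.mem_bot] at hx hy
    rw [hx, hy]
  have hur : Algebra.FormallyUnramified A B := ⟨hsub⟩
  obtain ⟨t, ht₁, ht₂⟩ := (Algebra.FormallyUnramified.iff_exists_tensorProduct).mp hur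
  obtain ⟨s, rfl⟩ := TensorProduct.exists_finset t
  -- turn `ht₂` into a statement about sums
  have ht₂' : (∑ p ∈ s, p.1 * p.2) = 1 := by
    rw [map_sum] at ht₂
    simpa using ht₂
  -- turn `ht₁` into coordinatewise statements
  have ht₁' : ∀ x : B, ∀ i : Fin n, (∑ p ∈ s, ε.coord i p.1 • (x * p.2)) =
      ∑ p ∈ s, ε.coord i (x * p.1) • p.2 := by
    intro x i
    have hx := ht₁ x
    have hx2 : ((1:B) ⊗ₜ[A] x) * ∑ p ∈ s, p.1 ⊗ₜ[A] p.2
        = (x ⊗ₜ[A] (1:B)) * ∑ p ∈ s, p.1 ⊗ₜ[A] p.2 := by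
      rw [← sub_eq_zero, ← sub_mul]; exact hx
    rw [Finset.mul_sum, Finset.mul_sum] at hx2
    simp only [Algebra.TensorProduct.tmul_mul_tmul] at hx2
    simp only [one_mul, mul_one] at hx2
    have := congrArg (TensorProduct.lift ((LinearMap.lsmul A B).comp (ε.coord i))) hx2
    simpa [map_sum, TensorProduct.lift.tmul] using this
  have key := aux_key ε s ht₁' ht₂'
  -- matrix argument
  set M := Algebra.traceMatrix A ε with hM
  set N : Matrix (Fin n) (Fin n) A := fun i j => ∑ p ∈ s, ε.repr p.1 i * ε.repr p.2 j with hN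
  have hMN : M * N = 1 := by
    ext l j
    rw [Matrix.mul_apply]
    have htr : ∀ c : B, Algebra.trace A B (ε l * c)
        = ∑ i, ε.repr c i * Algebra.trace A B (ε l * ε i) := by
      intro c
      conv_lhs => rw [← ε.sum_repr c, Finset.mul_sum]
      rw [map_sum]
      refine Finset.sum_congr rfl fun i _ => ?_
      rw [mul_smul_comm, map_smul, smul_eq_mul]
    calc (∑ i, M l i * N i j)
        = ∑ p ∈ s, (∑ i, ε.repr p.1 i * Algebra.trace A B (ε l * ε i)) * ε.repr p.2 j := by
          simp_rw [hM, hN, Algebra.traceMatrix_apply, Algebra.traceForm_apply,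
            Finset.mul_sum, Finset.sum_mul]
          rw [Finset.sum_comm]
          refine Finset.sum_congr rfl fun p _ => Finset.sum_congr rfl fun i _ => by ring
      _ = ε.repr (∑ p ∈ s, Algebra.trace A B (ε l * p.1) • p.2) j := by
          rw [map_sum]
          simp_rw [← htr]
          simp [Finsupp.smul_apply, smul_eq_mul]
      _ = (1 : Matrix (Fin n) (Fin n) A) l j := by
          rw [key (ε l), ε.repr_self, Matrix.one_apply]
          simp [Finsupp.single_apply, eq_comm]
  have hdet : IsUnit M.det := IsUnit.of_mul_eq_one N.det
    (by rw [← Matrix.det_mul, hMN, Matrix.det_one])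
  rwa [Algebra.discr_def]
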